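/- Let A₁, …, A_n be finite sets, k ≤ n, and suppose A₁ has maximum cardinality among them. Define A*_j = A_j ∪ P_j where P_j ⊆ A₁ \ A_j is chosen so that |A*_j| = |A₁| for each j (and A*_1 = A₁). For any indices i₁ < ⋯ < i_k with 1 ∉ {i₁,…,i_k}, let j minimize |A*_{i_j} \ ⋃_{v≠j} A*_{i_v}|. Then |A₁ ∪ ⋃_{v≠j} A_{i_v}| ≥ (1 - 1/k)·|A*_{i_1} ∪ ⋯ ∪ A*_{i_k}|. -/

import Mathlib

theorem stmt_9 {α : Type*} [DecidableEq α] (n k : ℕ) (hk : 0 < k) (hkn : k ≤ n) (hn : 0 < n)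
    (A P : Fin n → Finset α)
    (hmax : ∀ j, (A j).card ≤ (A ⟨0, hn⟩).card)
    (hP : ∀ j, P j ⊆ A ⟨0, hn⟩ \ A j)
    (hcard : ∀ j, (A j ∪ P j).card = (A ⟨0, hn⟩).card)
    (hP0 : P ⟨0, hn⟩ = ∅)
    (i : Fin k → Fin n) (hiinj : Function.Injective i) (hi0 : ∀ v, (i v : ℕ) ≠ 0)
    (j : Fin k)
    (hmin : ∀ v : Fin k,
      ((A (i j) ∪ P (i j)) \
          ((Finset.univ.erase j).biUnion fun v' => A (i v') ∪ P (i v'))).card ≤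
        ((A (i v) ∪ P (i v)) \
          ((Finset.univ.erase v).biUnion fun v' => A (i v') ∪ P (i v'))).card) :
    (1 - 1 / (k : ℝ)) *
        ((Finset.univ.biUnion fun v : Fin k => A (i v) ∪ P (i v)).card : ℝ) ≤
      (((A ⟨0, hn⟩ ∪ ((Finset.univ.erase j).biUnion fun v' => A (i v'))).card : ℝ)) := by
  classical
  set B : Fin k → Finset α := fun v => A (i v) ∪ P (i v) with hB
  set S : Finset α := Finset.univ.biUnion B with hS
  set U : Fin k → Finset α := fun v => B v \ ((Finset.univ.erase v).biUnion B) with hU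
  set T : Finset α := A ⟨0, hn⟩ ∪ ((Finset.univ.erase j).biUnion fun v' => A (i v')) with hT
  -- U v pairwise disjoint
  have hdisj : ∀ v ∈ (Finset.univ : Finset (Fin k)), ∀ w ∈ (Finset.univ : Finset (Fin k)),
      v ≠ w → Disjoint (U v) (U w) := by
    intro v _ w _ hvw
    rw [Finset.disjoint_left]
    intro x hxv hxw
    simp only [hU, Finset.mem_sdiff, Finset.mem_biUnion, Finset.mem_erase, not_exists] at hxv hxw
    exact hxw.2 v ⟨⟨hvw, Finset.mem_univ v⟩, hxv.1⟩
  have hUsubS : ∀ v, U v ⊆ S := by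
    intro v x hx
    simp only [hU, Finset.mem_sdiff] at hx
    exact Finset.mem_biUnion.2 ⟨v, Finset.mem_univ v, hx.1⟩
  -- k * |U j| ≤ |S|
  have hsum : k * (U j).card ≤ S.card := by
    calc k * (U j).card = ∑ v : Fin k, (U j).card := by
          simp [Finset.sum_const, Finset.card_univ, mul_comm]
      _ ≤ ∑ v : Fin k, (U v).card := Finset.sum_le_sum fun v _ => hmin v
      _ = (Finset.univ.biUnion U).card := (Finset.card_biUnion hdisj).symm
      _ ≤ S.card := Finset.card_le_card (Finset.biUnion_subset.2 fun v _ => hUsubS v)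
  -- |S| - |U j| ≤ |T|
  have hsub : S \ U j ⊆ T := by
    intro x hx
    rw [Finset.mem_sdiff] at hx
    obtain ⟨hxS, hxU⟩ := hx
    have hx' : x ∈ (Finset.univ.erase j).biUnion B := by
      rw [Finset.mem_biUnion] at hxS
      obtain ⟨v, _, hxv⟩ := hxS
      by_cases hvj : v = j
      · subst hvj
        by_contra hcon
        exact hxU (by simp only [hU, Finset.mem_sdiff]; exact ⟨hxv, hcon⟩)
      · exact Finset.mem_biUnion.2 ⟨v, Finset.mem_erase.2 ⟨hvj, Finset.mem_univ v⟩, hxv⟩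
    rw [Finset.mem_biUnion] at hx'
    obtain ⟨v, hv, hxv⟩ := hx'
    rw [hB, Finset.mem_union] at hxv
    rcases hxv with h | h
    · exact Finset.mem_union_right _ (Finset.mem_biUnion.2 ⟨v, hv, h⟩)
    · exact Finset.mem_union_left _ ((Finset.sdiff_subset) (hP (i v) h))
  have hcard2 : S.card - (U j).card ≤ T.card := by
    calc S.card - (U j).card = (S \ U j).card := (Finset.card_sdiff_of_subset (hUsubS j)).symm
      _ ≤ T.card := Finset.card_le_card hsub
  -- real arithmetic
  have hkR : (0 : ℝ) < k := by exact_mod_cast hk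
  have h1 : (k : ℝ) * (U j).card ≤ (S.card : ℝ) := by exact_mod_cast hsum
  have h2 : (S.card : ℝ) - (U j).card ≤ (T.card : ℝ) := by
    have hle : (U j).card ≤ S.card := Finset.card_le_card (hUsubS j)
    have := hcard2
    have : ((S.card - (U j).card : ℕ) : ℝ) ≤ (T.card : ℝ) := by exact_mod_cast hcard2
    rwa [Nat.cast_sub hle] at this
  have hu : ((U j).card : ℝ) ≤ (S.card : ℝ) / k := by
    rw [le_div_iff₀ hkR]; nlinarith
  show (1 - 1 / (k : ℝ)) * (S.card : ℝ) ≤ (T.card : ℝ)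
  have : (1 - 1 / (k : ℝ)) * (S.card : ℝ) = (S.card : ℝ) - (S.card : ℝ) / k := by
    field_simp
  rw [this]
  linarith
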